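/- arXiv:2603.28359 — 3 statements merged into one kernel-verified Lean document; each statement's English description precedes it below -/
import Mathlib

section
/- Let w be a real random variable with E[w] = 0 and P(|w| > t) = c·t^{−α}·(1 + o(1)) as t → ∞ for some α ∈ (1,2), c > 0. With τ_n = n^{1/α} and σ_n² = E[(w^{(τ_n)})²], the normalized relative fourth moment satisfies n^{−1}·E[(w^{(τ_n)})⁴] / (σ_n²)² → (2−α)²/(c(4−α)) as n → ∞; in particular this quantity converges to a strictly positive constant and does not tend to zero, so the standard fourth-moment (Chebyshev) method is exactly borderline for proving concentration of the empirical Winsorized second moment. -/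
open Filter MeasureTheory ProbabilityTheory

/-- Winsorization at level `τ`: `w^{(τ)} = w·1{|w| ≤ τ} + τ·sign(w)·1{|w| > τ}`. -/
noncomputable def winsor (τ x : ℝ) : ℝ := max (-τ) (min τ x)

open Set in
lemma abs_winsor {τ : ℝ} (hτ : 0 < τ) (x : ℝ) : |winsor τ x| = min τ |x| := by
  unfold winsor
  rcases le_total 0 x with hx | hx
  · have h0 : 0 ≤ min τ x := le_min hτ.le hx
    rw [max_eq_right (le_trans (neg_nonpos_of_nonneg hτ.le) h0), abs_of_nonneg h0,
      abs_of_nonneg hx]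
  · have h1 : min τ x = x := min_eq_right (hx.trans hτ.le)
    rw [h1, abs_of_nonpos (max_le (neg_nonpos_of_nonneg hτ.le) hx), abs_of_nonpos hx]
    rw [← min_neg_neg, neg_neg]

lemma winsor_even_pow {τ : ℝ} (hτ : 0 < τ) {k : ℕ} (hk : Even k) (x : ℝ) :
    (winsor τ x) ^ k = (min τ |x|) ^ k := by
  rw [← hk.pow_abs (winsor τ x), abs_winsor hτ]

open Set in
lemma image_pow_Ioc {τ : ℝ} (hτ : 0 < τ) {k : ℕ} (hk : k ≠ 0) :
    (fun s : ℝ => s ^ k) '' Ioc 0 τ = Ioc 0 (τ ^ k) := by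
  ext y
  simp only [mem_image, mem_Ioc]
  constructor
  · rintro ⟨s, ⟨hs0, hsτ⟩, rfl⟩
    exact ⟨pow_pos hs0 k, pow_le_pow_left₀ hs0.le hsτ k⟩
  · rintro ⟨hy0, hyτ⟩
    have hkR : ((k : ℝ)) ≠ 0 := Nat.cast_ne_zero.mpr hk
    refine ⟨y ^ ((k : ℝ)⁻¹), ⟨Real.rpow_pos_of_pos hy0 _, ?_⟩, ?_⟩
    · have := Real.rpow_le_rpow hy0.le hyτ (by positivity : (0:ℝ) ≤ (k : ℝ)⁻¹)
      calc y ^ ((k : ℝ)⁻¹) ≤ (τ ^ k) ^ ((k : ℝ)⁻¹) := this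
        _ = τ := by
          rw [← Real.rpow_natCast τ k, ← Real.rpow_mul hτ.le, mul_inv_cancel₀ hkR,
            Real.rpow_one]
    · rw [← Real.rpow_natCast (y ^ ((k:ℝ)⁻¹)) k, ← Real.rpow_mul hy0.le,
        inv_mul_cancel₀ hkR, Real.rpow_one]

open Set in
/-- Layer-cake formula for even powers of the winsorized variable. -/
lemma layer {Ω : Type*} [MeasurableSpace Ω] (μ : Measure Ω) [IsProbabilityMeasure μ]
    (w : Ω → ℝ) (hw : Measurable w) (k : ℕ) (hk : Even k) (hk0 : k ≠ 0)
    {τ : ℝ} (hτ : 0 < τ) :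
    ∫ ω, (winsor τ (w ω)) ^ k ∂μ
      = ∫ s in Ioc (0:ℝ) τ, ((k : ℝ) * s ^ (k - 1)) * (μ {ω | s < |w ω|}).toReal := by
  have hwin : ∀ ω, (winsor τ (w ω)) ^ k = (min τ |w ω|) ^ k :=
    fun ω => winsor_even_pow hτ hk (w ω)
  simp only [hwin]
  set f : Ω → ℝ := fun ω => min τ |w ω| with hf
  have hfm : Measurable f := measurable_const.min hw.abs
  have hf_nn : ∀ ω, 0 ≤ f ω := fun ω => le_min hτ.le (abs_nonneg _)
  have hfb : ∀ ω, f ω ≤ τ := fun ω => min_le_left _ _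
  have hint : Integrable (fun ω => f ω ^ k) μ := by
    refine (integrable_const (τ ^ k)).mono'
      ((hfm.pow_const k).aestronglyMeasurable) (ae_of_all _ fun ω => ?_)
    rw [Real.norm_eq_abs, abs_of_nonneg (pow_nonneg (hf_nn ω) k)]
    exact pow_le_pow_left₀ (hf_nn ω) (hfb ω) k
  rw [hint.integral_eq_integral_Ioc_meas_le
    (ae_of_all _ fun ω => pow_nonneg (hf_nn ω) k)
    (ae_of_all _ fun ω => pow_le_pow_left₀ (hf_nn ω) (hfb ω) k)]
  have hinj : InjOn (fun s : ℝ => s ^ k) (Ioc 0 τ) :=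
    ((pow_left_strictMonoOn₀ hk0).injOn).mono (fun x hx => le_of_lt hx.1)
  have hcov := integral_image_eq_integral_abs_deriv_smul (measurableSet_Ioc)
    (fun x _ => (hasDerivAt_pow k x).hasDerivWithinAt) hinj
    (fun t => (μ {a | t ≤ f a ^ k}).toReal)
  rw [← image_pow_Ioc hτ hk0]
  refine hcov.trans ?_
  have hstep1 : ∀ s ∈ Ioc (0:ℝ) τ,
      |(k:ℝ) * s ^ (k - 1)| • (μ {a | s ^ k ≤ f a ^ k}).toReal
        = ((k:ℝ) * s ^ (k - 1)) * (μ {a | s ≤ |w a|}).toReal := by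
    intro s hs
    have hs0 : 0 < s := hs.1
    have hset : {a | s ^ k ≤ f a ^ k} = {a | s ≤ |w a|} := by
      ext a
      simp only [Set.mem_setOf_eq]
      rw [pow_le_pow_iff_left₀ hs0.le (hf_nn a) hk0, hf, le_min_iff]
      exact ⟨fun h => h.2, fun h => ⟨hs.2, h⟩⟩
    rw [hset, smul_eq_mul, abs_of_nonneg (by positivity)]
  rw [setIntegral_congr_fun measurableSet_Ioc hstep1]
  apply integral_congr_ae
  filter_upwards [meas_le_ae_eq_meas_lt μ (volume.restrict (Ioc 0 τ))
    (fun ω => |w ω|)] with t ht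
  rw [ht]

open Set in
/-- Karamata-type asymptotics for moment integrals against a regularly varying tail. -/
lemma karamata {α c : ℝ} (hα : 0 < α) (k : ℕ) (hk : α < k) (G : ℝ → ℝ)
    (hmono : Antitone G)
    (htail : Tendsto (fun t => t ^ α * G t) atTop (nhds c)) :
    Tendsto (fun τ : ℝ => τ ^ (α - (k:ℝ)) * ∫ s in Ioc (0:ℝ) τ, ((k:ℝ) * s ^ (k - 1)) * G s)
      atTop (nhds ((k:ℝ) * c / ((k:ℝ) - α))) := by
  set m : ℝ := (k : ℝ) with hm
  have hmα : 0 < m - α := sub_pos.2 hk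
  have hm0 : 0 < m := hα.trans hk
  have hk1 : 1 ≤ k := Nat.cast_pos.mp hm0
  have hI : ∀ a b : ℝ, IntervalIntegrable (fun s => ((k:ℝ) * s ^ (k - 1)) * G s) volume a b :=
    fun a b => hmono.intervalIntegrable.continuousOn_mul
      (Continuous.continuousOn (by continuity))
  set F : ℝ → ℝ := fun x => ∫ s in (0:ℝ)..x, ((k:ℝ) * s ^ (k - 1)) * G s with hF
  rw [Metric.tendsto_nhds]
  intro ε hε
  set L : ℝ := m * c / (m - α) with hL
  set δ : ℝ := ε * (m - α) / (4 * m) with hδdef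
  have hδ : 0 < δ := by positivity
  obtain ⟨T₀, hT₀⟩ := eventually_atTop.mp (Metric.tendsto_nhds.mp htail δ hδ)
  set T : ℝ := max T₀ 1 with hTdef
  have hT1 : (1:ℝ) ≤ T := le_max_right _ _
  have hTpos : 0 < T := lt_of_lt_of_le one_pos hT1
  have htb : ∀ t, T ≤ t → |t ^ α * G t - c| ≤ δ := by
    intro t ht
    have := hT₀ t (le_trans (le_max_left _ _) ht)
    rw [Real.dist_eq] at this
    exact this.le
  -- pointwise bounds on the integrand for t ≥ T
  have hpt : ∀ t : ℝ, T ≤ t →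
      (m * t ^ (m - 1 - α)) * (c - δ) ≤ ((k:ℝ) * t ^ (k - 1)) * G t ∧
      ((k:ℝ) * t ^ (k - 1)) * G t ≤ (m * t ^ (m - 1 - α)) * (c + δ) := by
    intro t ht
    have htpos : 0 < t := lt_of_lt_of_le hTpos ht
    have hsplit : ((k:ℝ) * t ^ (k - 1)) * G t = (m * t ^ (m - 1 - α)) * (t ^ α * G t) := by
      have h1 : t ^ (k - 1) = t ^ (m - 1) := by
        rw [← Real.rpow_natCast t (k - 1)]
        congr 1
        push_cast [Nat.cast_sub hk1]
        ring
      have h2 : t ^ (m - 1 - α) * t ^ α = t ^ (m - 1) := by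
        rw [← Real.rpow_add htpos]
        ring_nf
      rw [h1, ← h2]
      ring
    have hb := abs_le.mp (htb t ht)
    have h0 : 0 ≤ m * t ^ (m - 1 - α) := by positivity
    constructor
    · rw [hsplit]
      exact mul_le_mul_of_nonneg_left (by linarith [hb.1]) h0
    · rw [hsplit]
      exact mul_le_mul_of_nonneg_left (by linarith [hb.2]) h0
  -- value of the comparison integral
  have hint_rpow : ∀ τ : ℝ, T ≤ τ →
      ∫ t in T..τ, m * t ^ (m - 1 - α) = m * ((τ ^ (m - α) - T ^ (m - α)) / (m - α)) := by
    intro τ hτ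
    rw [intervalIntegral.integral_const_mul,
      integral_rpow (Or.inl (by linarith : (-1:ℝ) < m - 1 - α))]
    rw [show m - 1 - α + 1 = m - α by ring]
  have hcomp_int : ∀ τ : ℝ, T ≤ τ → ∀ d : ℝ,
      IntervalIntegrable (fun t => (m * t ^ (m - 1 - α)) * d) volume T τ := by
    intro τ hτ d
    apply ContinuousOn.intervalIntegrable
    apply ContinuousOn.mul _ continuousOn_const
    apply ContinuousOn.mul continuousOn_const
    intro t ht
    rw [Set.uIcc_of_le hτ] at ht
    exact (Real.continuousAt_rpow_const t _
      (Or.inl (ne_of_gt (lt_of_lt_of_le hTpos ht.1)))).continuousWithinAt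
  -- the limit of the negative power
  have hev0 : Tendsto (fun τ : ℝ => τ ^ (α - m)) atTop (nhds 0) := by
    have := tendsto_rpow_neg_atTop hmα
    simpa [neg_sub] using this
  have hkey : δ * (m / (m - α)) = ε / 4 := by
    rw [hδdef]
    field_simp
  -- lower bound function tendsto
  have hlo : Tendsto (fun τ : ℝ => τ ^ (α - m) * F T
      + (c - δ) * ((m / (m - α)) * (1 - T ^ (m - α) * τ ^ (α - m)))) atTop
      (nhds (0 * F T + (c - δ) * ((m / (m - α)) * (1 - T ^ (m - α) * 0)))) := by
    exact (hev0.mul_const _).add (tendsto_const_nhds.mul (tendsto_const_nhds.mul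
      (tendsto_const_nhds.sub (tendsto_const_nhds.mul hev0))))
  have hhi : Tendsto (fun τ : ℝ => τ ^ (α - m) * F T
      + (c + δ) * ((m / (m - α)) * (1 - T ^ (m - α) * τ ^ (α - m)))) atTop
      (nhds (0 * F T + (c + δ) * ((m / (m - α)) * (1 - T ^ (m - α) * 0)))) := by
    exact (hev0.mul_const _).add (tendsto_const_nhds.mul (tendsto_const_nhds.mul
      (tendsto_const_nhds.sub (tendsto_const_nhds.mul hev0))))
  have hloval : 0 * F T + (c - δ) * ((m / (m - α)) * (1 - T ^ (m - α) * 0)) = L - ε / 4 := by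
    have h1 : (c - δ) * (m / (m - α)) = L - δ * (m / (m - α)) := by
      rw [hL]; ring
    rw [hkey] at h1
    rw [mul_zero, sub_zero, mul_one, zero_mul, zero_add, h1]
  have hhival : 0 * F T + (c + δ) * ((m / (m - α)) * (1 - T ^ (m - α) * 0)) = L + ε / 4 := by
    have h1 : (c + δ) * (m / (m - α)) = L + δ * (m / (m - α)) := by
      rw [hL]; ring
    rw [hkey] at h1
    rw [mul_zero, sub_zero, mul_one, zero_mul, zero_add, h1]
  rw [hloval] at hlo
  rw [hhival] at hhi
  have ev_lo := hlo.eventually (eventually_gt_nhds (by linarith : L - ε / 2 < L - ε / 4))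
  have ev_hi := hhi.eventually (eventually_lt_nhds (by linarith : L + ε / 4 < L + ε / 2))
  filter_upwards [ev_lo, ev_hi, eventually_ge_atTop (max T 1)] with τ hloτ hhiτ hτm
  have hτT : T ≤ τ := le_trans (le_max_left _ _) hτm
  have hτ1 : (1:ℝ) ≤ τ := le_trans (le_max_right _ _) hτm
  have hτpos : 0 < τ := lt_of_lt_of_le one_pos hτ1
  have hIoc : ∫ s in Ioc (0:ℝ) τ, ((k:ℝ) * s ^ (k - 1)) * G s = F τ :=
    (intervalIntegral.integral_of_le (by linarith)).symm
  rw [Real.dist_eq, hIoc]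
  have hFsplit : F τ = F T + ∫ t in T..τ, ((k:ℝ) * t ^ (k - 1)) * G t :=
    (intervalIntegral.integral_add_adjacent_intervals (hI 0 T) (hI T τ)).symm
  have hτα : 0 < τ ^ (α - m) := Real.rpow_pos_of_pos hτpos _
  have huv : τ ^ (α - m) * τ ^ (m - α) = 1 := by
    rw [← Real.rpow_add hτpos, show α - m + (m - α) = 0 by ring, Real.rpow_zero]
  -- upper estimate of the middle integral
  have hup : ∫ t in T..τ, ((k:ℝ) * t ^ (k - 1)) * G t
      ≤ (m * ((τ ^ (m - α) - T ^ (m - α)) / (m - α))) * (c + δ) := by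
    calc ∫ t in T..τ, ((k:ℝ) * t ^ (k - 1)) * G t
        ≤ ∫ t in T..τ, (m * t ^ (m - 1 - α)) * (c + δ) := by
          apply intervalIntegral.integral_mono_on hτT (hI T τ) (hcomp_int τ hτT _)
          intro t ht
          exact (hpt t ht.1).2
      _ = (m * ((τ ^ (m - α) - T ^ (m - α)) / (m - α))) * (c + δ) := by
          rw [intervalIntegral.integral_mul_const, hint_rpow τ hτT]
  have hlow : (m * ((τ ^ (m - α) - T ^ (m - α)) / (m - α))) * (c - δ)
      ≤ ∫ t in T..τ, ((k:ℝ) * t ^ (k - 1)) * G t := by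
    calc (m * ((τ ^ (m - α) - T ^ (m - α)) / (m - α))) * (c - δ)
        = ∫ t in T..τ, (m * t ^ (m - 1 - α)) * (c - δ) := by
          rw [intervalIntegral.integral_mul_const, hint_rpow τ hτT]
      _ ≤ ∫ t in T..τ, ((k:ℝ) * t ^ (k - 1)) * G t := by
          apply intervalIntegral.integral_mono_on hτT (hcomp_int τ hτT _) (hI T τ)
          intro t ht
          exact (hpt t ht.1).1
  -- algebraic identities after multiplying by τ^(α-m)
  have hidu : τ ^ (α - m) * ((m * ((τ ^ (m - α) - T ^ (m - α)) / (m - α))) * (c + δ))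
      = (c + δ) * ((m / (m - α)) * (1 - T ^ (m - α) * τ ^ (α - m))) := by
    linear_combination ((c + δ) * m / (m - α)) * huv
  have hidl : τ ^ (α - m) * ((m * ((τ ^ (m - α) - T ^ (m - α)) / (m - α))) * (c - δ))
      = (c - δ) * ((m / (m - α)) * (1 - T ^ (m - α) * τ ^ (α - m))) := by
    linear_combination ((c - δ) * m / (m - α)) * huv
  have hub2 : τ ^ (α - m) * F τ
      ≤ τ ^ (α - m) * F T + (c + δ) * ((m / (m - α)) * (1 - T ^ (m - α) * τ ^ (α - m))) := by
    rw [hFsplit, mul_add]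
    have := mul_le_mul_of_nonneg_left hup hτα.le
    rw [hidu] at this
    linarith
  have hlb2 : τ ^ (α - m) * F T + (c - δ) * ((m / (m - α)) * (1 - T ^ (m - α) * τ ^ (α - m)))
      ≤ τ ^ (α - m) * F τ := by
    rw [hFsplit, mul_add]
    have := mul_le_mul_of_nonneg_left hlow hτα.le
    rw [hidl] at this
    linarith
  rw [abs_sub_lt_iff]
  constructor <;> linarith

lemma key_alg {τ nn Ev S α : ℝ} (hτ : 0 < τ) (hn : τ ^ α = nn) :
    (τ ^ (α - 4) * Ev) / (τ ^ (α - 2) * S) ^ 2 = (nn⁻¹ * Ev) / S ^ 2 := by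
  have hne : τ ^ ((α - 2) * 2) ≠ 0 := ne_of_gt (Real.rpow_pos_of_pos hτ _)
  have h1 : (τ ^ (α - 2) * S) ^ 2 = τ ^ ((α - 2) * 2) * S ^ 2 := by
    rw [mul_pow]
    congr 1
    rw [← Real.rpow_natCast (τ ^ (α - 2)) 2, ← Real.rpow_mul hτ.le]
    norm_num
  have h3 : τ ^ (α - 4) = τ ^ ((α - 2) * 2) * (τ ^ α)⁻¹ := by
    rw [← Real.rpow_neg hτ.le, ← Real.rpow_add hτ]
    congr 1
    ring
  rw [h1, h3, ← hn,
    show τ ^ ((α - 2) * 2) * (τ ^ α)⁻¹ * Ev = τ ^ ((α - 2) * 2) * ((τ ^ α)⁻¹ * Ev) from by ring,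
    mul_div_mul_left _ _ hne]

/-- **The fourth-moment method is exactly borderline.**
Under the regularly-varying tail assumption with `α ∈ (1,2)`, `c > 0`, with
`τ_n = n^{1/α}` and `σ_n² = E[(w^{(τ_n)})²]`, the normalized relative fourth moment
`n^{-1} E[(w^{(τ_n)})⁴] / (σ_n²)²` converges to the strictly positive constant
`(2-α)²/(c(4-α))`; in particular it does not tend to zero. -/
theorem winsorized_relative_fourth_moment_borderline
    {Ω : Type*} [MeasurableSpace Ω] (μ : Measure Ω) [IsProbabilityMeasure μ]
    (w : Ω → ℝ) (hw : Measurable w)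
    (α c : ℝ) (hα₁ : 1 < α) (hα₂ : α < 2) (hc : 0 < c)
    (hint : Integrable w μ) (hmean : ∫ ω, w ω ∂μ = 0)
    (htail : Tendsto (fun t : ℝ => t ^ α * (μ {ω | t < |w ω|}).toReal)
      atTop (nhds c)) :
    Tendsto (fun n : ℕ =>
        ((n : ℝ)⁻¹ * ∫ ω, (winsor ((n : ℝ) ^ (1 / α)) (w ω)) ^ 4 ∂μ) /
          (∫ ω, (winsor ((n : ℝ) ^ (1 / α)) (w ω)) ^ 2 ∂μ) ^ 2)
      atTop (nhds ((2 - α) ^ 2 / (c * (4 - α))))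
    ∧ 0 < (2 - α) ^ 2 / (c * (4 - α)) := by
  have hα0 : (0:ℝ) < α := lt_trans one_pos hα₁
  have h2α : (0:ℝ) < 2 - α := by linarith
  have h4α : (0:ℝ) < 4 - α := by linarith
  refine ⟨?_, div_pos (pow_pos h2α 2) (mul_pos hc h4α)⟩
  set G : ℝ → ℝ := fun t => (μ {ω | t < |w ω|}).toReal with hG
  have hmono : Antitone G := by
    intro s t hst
    apply ENNReal.toReal_mono (measure_ne_top μ _)
    exact measure_mono (fun ω hω => lt_of_le_of_lt hst hω)
  have h2 := karamata hα0 2 (by push_cast; linarith) G hmono htail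
  have h4 := karamata hα0 4 (by push_cast; linarith) G hmono htail
  have h2' : Tendsto (fun τ : ℝ => τ ^ (α - ((2:ℕ):ℝ)) * ∫ ω, (winsor τ (w ω)) ^ 2 ∂μ)
      atTop (nhds (((2:ℕ):ℝ) * c / (((2:ℕ):ℝ) - α))) := by
    apply Tendsto.congr' _ h2
    filter_upwards [eventually_gt_atTop 0] with τ hτ
    rw [layer μ w hw 2 (by decide) (by norm_num) hτ]
  have h4' : Tendsto (fun τ : ℝ => τ ^ (α - ((4:ℕ):ℝ)) * ∫ ω, (winsor τ (w ω)) ^ 4 ∂μ)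
      atTop (nhds (((4:ℕ):ℝ) * c / (((4:ℕ):ℝ) - α))) := by
    apply Tendsto.congr' _ h4
    filter_upwards [eventually_gt_atTop 0] with τ hτ
    rw [layer μ w hw 4 (by decide) (by norm_num) hτ]
  have hK2pos : 0 < ((2:ℕ):ℝ) * c / (((2:ℕ):ℝ) - α) := by
    apply div_pos (mul_pos (by norm_num) hc) (by push_cast; linarith)
  have hdiv := Filter.Tendsto.div h4' (h2'.pow 2)
    (pow_ne_zero 2 (ne_of_gt hK2pos))
  have hval : ((4:ℕ):ℝ) * c / (((4:ℕ):ℝ) - α) / (((2:ℕ):ℝ) * c / (((2:ℕ):ℝ) - α)) ^ 2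
      = (2 - α) ^ 2 / (c * (4 - α)) := by
    push_cast
    field_simp
    ring
  rw [hval] at hdiv
  have hτn : Tendsto (fun n : ℕ => ((n:ℝ)) ^ (1 / α)) atTop atTop :=
    (tendsto_rpow_atTop (by positivity)).comp tendsto_natCast_atTop_atTop
  apply Tendsto.congr' _ (hdiv.comp hτn)
  filter_upwards [eventually_ge_atTop 1] with n hn
  simp only [Function.comp_apply, Pi.div_apply]
  have hnpos : (0:ℝ) < (n:ℝ) := by exact_mod_cast Nat.lt_of_lt_of_le Nat.zero_lt_one hn
  have hτpos : 0 < ((n:ℝ)) ^ (1 / α) := Real.rpow_pos_of_pos hnpos _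
  have hτα : (((n:ℝ)) ^ (1 / α)) ^ α = (n:ℝ) := by
    rw [← Real.rpow_mul hnpos.le, one_div, inv_mul_cancel₀ (ne_of_gt hα0), Real.rpow_one]
  push_cast
  rw [key_alg hτpos hτα]
end

section
/- Let w be a real random variable with E[w] = 0 and P(|w| > t) = c·t^{−α}·(1 + o(1)) as t → ∞ for some α ∈ (1,2), c > 0. With τ_n = n^{1/α} and σ_n² = E[(w^{(τ_n)})²], the total Fisher-information proxy I_n = n/σ_n² satisfies I_n / n^{(2α−2)/α} → (2−α)/(2c) as n → ∞; in particular, since (2α−2)/α > 0 for α > 1, I_n → ∞. (Theorem 3.2: the data become increasingly informative even though the effective variance diverges.) -/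
open Filter MeasureTheory ProbabilityTheory

section Auxiliary

open Set

lemma integrableOn_of_bdd {f : ℝ → ℝ} (hm : Measurable f) {s : Set ℝ} {a b C : ℝ}
    (hs : MeasurableSet s) (hsub : s ⊆ Icc a b) (hbd : ∀ t ∈ s, |f t| ≤ C) :
    IntegrableOn f s volume := by
  apply Measure.integrableOn_of_bounded (M := C)
  · exact ne_top_of_le_ne_top (by simp) (measure_mono hsub)
  · exact hm.aestronglyMeasurable
  · exact (ae_restrict_iff' hs).2 (Eventually.of_forall (fun t ht => by
      simpa [Real.norm_eq_abs] using hbd t ht))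

set_option maxHeartbeats 1000000 in
private lemma karamata_aux {p : ℝ → ℝ} (hpm : Measurable p) (hp0 : ∀ t, 0 ≤ p t)
    (hp1 : ∀ t, p t ≤ 1) {α c : ℝ} (hα₁ : 1 < α) (hα₂ : α < 2) (hc : 0 < c)
    (h : Tendsto (fun t => t ^ α * p t) atTop (nhds c)) :
    Tendsto (fun τ => τ ^ (α - 2) * ∫ t in Ioo (0:ℝ) τ, 2 * t * p t) atTop
      (nhds (2 * c / (2 - α))) := by
  have h2α : (0:ℝ) < 2 - α := by linarith
  have hφm : Measurable (fun t : ℝ => 2 * t * p t) :=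
    (measurable_const.mul measurable_id).mul hpm
  rw [Metric.tendsto_atTop]
  intro ε hε
  set ε' := min (ε * (2 - α) / 8) (c / 2) with hε'def
  clear_value ε'
  have hε'pos : 0 < ε' := by
    rw [hε'def]
    exact lt_min (by nlinarith) (by linarith)
  have hε'c : ε' ≤ c / 2 := by rw [hε'def]; exact min_le_right _ _
  have hε'ε : 8 * ε' ≤ ε * (2 - α) := by
    have h8 : ε' ≤ ε * (2 - α) / 8 := by rw [hε'def]; exact min_le_left _ _
    linarith
  obtain ⟨U₀, hU₀⟩ := Metric.tendsto_atTop.mp h ε' hε'pos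
  set U := max U₀ 1 with hUdef
  clear_value U
  have hU1 : (1:ℝ) ≤ U := by rw [hUdef]; exact le_max_right _ _
  have hU0 : (0:ℝ) < U := by linarith
  have hU : ∀ t, U ≤ t → |t ^ α * p t - c| < ε' := fun t ht => by
    have hU₀le : U₀ ≤ U := by rw [hUdef]; exact le_max_left _ _
    have := hU₀ t (le_trans hU₀le ht)
    rwa [Real.dist_eq] at this
  have hdecay : Tendsto (fun τ : ℝ => (2*U^2 + 2*c/(2-α) * U^(2-α) + 1) * τ^(α-2))
      atTop (nhds 0) := by
    have h1 : Tendsto (fun τ : ℝ => τ ^ (α-2)) atTop (nhds 0) := by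
      have := tendsto_rpow_neg_atTop h2α
      simpa [neg_sub] using this
    simpa using h1.const_mul (2*U^2 + 2*c/(2-α) * U^(2-α) + 1)
  obtain ⟨M, hM⟩ := eventually_atTop.mp
    (hdecay.eventually_lt_const (by positivity : (0:ℝ) < ε/2))
  refine ⟨max (max U 1) M, fun τ hτ => ?_⟩
  have hτU : U ≤ τ := le_trans (le_trans (le_max_left _ _) (le_max_left _ _)) hτ
  have hτM : M ≤ τ := le_trans (le_max_right _ _) hτ
  have hτ0 : (0:ℝ) < τ := lt_of_lt_of_le hU0 hτU
  set x := τ ^ (α - 2) with hxdef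
  clear_value x
  have hx0 : 0 < x := by rw [hxdef]; exact Real.rpow_pos_of_pos hτ0 _
  have hxτ : x * τ ^ (2 - α) = 1 := by
    rw [hxdef, ← Real.rpow_add hτ0]
    norm_num
  set D := U ^ (2 - α) * x with hDdef
  clear_value D
  have hD0 : 0 < D := by rw [hDdef]; exact mul_pos (Real.rpow_pos_of_pos hU0 _) hx0
  have hD1 : D ≤ 1 := by
    have hle : U ^ (2-α) ≤ τ ^ (2-α) := Real.rpow_le_rpow hU0.le hτU h2α.le
    calc D = U ^ (2-α) * x := hDdef
    _ ≤ τ^(2-α) * x := by nlinarith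
    _ = 1 := by rw [mul_comm]; exact hxτ
  -- integrability
  have hintφ : ∀ s : Set ℝ, MeasurableSet s → s ⊆ Icc 0 τ →
      IntegrableOn (fun t => 2*t*p t) s volume := by
    intro s hs hsub
    refine integrableOn_of_bdd hφm hs hsub (C := 2*τ) (fun t ht => ?_)
    obtain ⟨ht1, ht2⟩ := hsub ht
    have h1 := hp0 t; have h2 := hp1 t
    rw [abs_of_nonneg (by nlinarith)]
    nlinarith
  have hintA : IntegrableOn (fun t => 2*t*p t) (Ioo 0 U) volume :=
    hintφ _ measurableSet_Ioo (fun t ht => ⟨ht.1.le, le_trans ht.2.le hτU⟩)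
  have hintB : IntegrableOn (fun t => 2*t*p t) (Ico U τ) volume :=
    hintφ _ measurableSet_Ico (fun t ht => ⟨by linarith [ht.1], ht.2.le⟩)
  have hdisj : Disjoint (Ioo (0:ℝ) U) (Ico U τ) := by
    rw [Set.disjoint_left]
    rintro t ⟨_, h2⟩ ⟨h3, _⟩
    exact absurd h3 (not_le.2 h2)
  have hsplit : ∫ t in Ioo (0:ℝ) τ, 2*t*p t
      = (∫ t in Ioo (0:ℝ) U, 2*t*p t) + ∫ t in Ico U τ, 2*t*p t := by
    rw [← setIntegral_union hdisj measurableSet_Ico hintA hintB,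
      Ioo_union_Ico_eq_Ioo hU0 hτU]
  -- the rpow integral
  have hintJ : IntegrableOn (fun t : ℝ => t ^ (1 - α)) (Ico U τ) volume := by
    refine integrableOn_of_bdd (by fun_prop) measurableSet_Ico Ico_subset_Icc_self
      (C := U ^ (1-α)) (fun t ht => ?_)
    have ht0 : 0 < t := lt_of_lt_of_le hU0 ht.1
    rw [abs_of_nonneg (Real.rpow_nonneg ht0.le _)]
    exact Real.rpow_le_rpow_of_nonpos hU0 ht.1 (by linarith)
  have hJval : ∫ t in Ico U τ, t ^ (1-α) = (τ^(2-α) - U^(2-α)) / (2-α) := by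
    rw [integral_Ico_eq_integral_Ioo, ← integral_Ioc_eq_integral_Ioo, ← intervalIntegral.integral_of_le hτU,
      integral_rpow (Or.inl (by linarith : (-1:ℝ) < 1 - α))]
    have e : 1 - α + 1 = 2 - α := by ring
    rw [e]
  -- pointwise rewriting on [U, τ)
  have hpt : ∀ t ∈ Ico U τ, 2*t*p t = (2 * t^(1-α)) * (t^α * p t) := by
    intro t ht
    have ht0 : 0 < t := lt_of_lt_of_le hU0 ht.1
    have hrr : t ^ (1-α) * t ^ α = t := by
      rw [← Real.rpow_add ht0]; norm_num
    calc 2*t*p t = 2 * (t^(1-α) * t^α) * p t := by rw [hrr]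
    _ = (2 * t^(1-α)) * (t^α * p t) := by ring
  have hBub : ∫ t in Ico U τ, 2*t*p t ≤ (2*(c+ε')) * ∫ t in Ico U τ, t^(1-α) := by
    rw [← integral_const_mul]
    refine setIntegral_mono_on hintB (hintJ.const_mul _) measurableSet_Ico (fun t ht => ?_)
    rw [hpt t ht]
    have hb := (abs_lt.mp (hU t ht.1)).2
    have ht0 : 0 < t := lt_of_lt_of_le hU0 ht.1
    have hr0 : (0:ℝ) ≤ 2 * t ^ (1-α) := by positivity
    calc (2*t^(1-α)) * (t^α * p t) ≤ (2*t^(1-α)) * (c+ε') := by nlinarith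
    _ = (2*(c+ε')) * t^(1-α) := by ring
  have hBlb : (2*(c-ε')) * ∫ t in Ico U τ, t^(1-α) ≤ ∫ t in Ico U τ, 2*t*p t := by
    rw [← integral_const_mul]
    refine setIntegral_mono_on (hintJ.const_mul _) hintB measurableSet_Ico (fun t ht => ?_)
    rw [hpt t ht]
    have hb := (abs_lt.mp (hU t ht.1)).1
    have ht0 : 0 < t := lt_of_lt_of_le hU0 ht.1
    have hr0 : (0:ℝ) ≤ 2 * t ^ (1-α) := by positivity
    calc (2*(c-ε')) * t^(1-α) = (2*t^(1-α)) * (c-ε') := by ring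
    _ ≤ (2*t^(1-α)) * (t^α * p t) := by nlinarith
  have hA0 : 0 ≤ ∫ t in Ioo (0:ℝ) U, 2*t*p t :=
    setIntegral_nonneg measurableSet_Ioo (fun t ht => by nlinarith [hp0 t, ht.1])
  have hAub : ∫ t in Ioo (0:ℝ) U, 2*t*p t ≤ 2*U^2 := by
    have hconst : IntegrableOn (fun _ : ℝ => 2*U) (Ioo (0:ℝ) U) volume :=
      integrableOn_const (by rw [Real.volume_Ioo]; exact ENNReal.ofReal_ne_top)
    have step : ∫ t in Ioo (0:ℝ) U, 2*t*p t ≤ ∫ _t in Ioo (0:ℝ) U, 2*U := by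
      refine setIntegral_mono_on hintA hconst measurableSet_Ioo (fun t ht => ?_)
      have h1 : 2*t*p t ≤ 2*t*1 :=
        mul_le_mul_of_nonneg_left (hp1 t) (by linarith [ht.1.le])
      have h2 : t ≤ U := ht.2.le
      linarith
    have : ∫ _t in Ioo (0:ℝ) U, (2*U : ℝ) = (U - 0) * (2*U) := by
      rw [setIntegral_const, measureReal_def, Real.volume_Ioo, ENNReal.toReal_ofReal (by linarith)]
      simp [smul_eq_mul]
    have e2 : (U - 0) * (2*U) = 2*U^2 := by ring
    linarith [step, this.le, this.ge]
  -- assemble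
  rw [Real.dist_eq, hsplit]
  set A := ∫ t in Ioo (0:ℝ) U, 2*t*p t with hAdef
  set B := ∫ t in Ico U τ, 2*t*p t with hBdef
  set J := ∫ t in Ico U τ, (t:ℝ)^(1-α) with hJdef
  clear_value A B J
  have hxJ : x * J * (2-α) = 1 - D := by
    have e : x * ((τ^(2-α) - U^(2-α))/(2-α)) * (2-α) = x*τ^(2-α) - U^(2-α)*x := by
      field_simp
    rw [hJval, e, hxτ, ← hDdef]
  have hJ0 : 0 ≤ J := by
    have h1 : 0 ≤ x*J*(2-α) := by rw [hxJ]; linarith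
    nlinarith [mul_pos hx0 h2α]
  have hdec := hM τ hτM
  have hxA0 : 0 ≤ x * A := mul_nonneg hx0.le hA0
  have hxAub : x * A ≤ 2*U^2*x := by nlinarith [hAub, hx0.le]
  have hxBub : x * B ≤ (2*(c+ε')) * (x*J) := by
    have h1 := mul_le_mul_of_nonneg_left hBub hx0.le
    have e : x*((2*(c+ε')) * J) = (2*(c+ε'))*(x*J) := by ring
    linarith [e ▸ h1]
  have hxBlb : (2*(c-ε')) * (x*J) ≤ x * B := by
    have h1 := mul_le_mul_of_nonneg_left hBlb hx0.le
    have e : x*((2*(c-ε')) * J) = (2*(c-ε'))*(x*J) := by ring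
    linarith [e ▸ h1]
  have hQ0 : (0:ℝ) ≤ 2*c/(2-α)*U^(2-α)*x :=
    mul_nonneg (mul_nonneg (by positivity) (Real.rpow_nonneg hU0.le _)) hx0.le
  have h2U2x0 : (0:ℝ) ≤ 2*U^2*x := by nlinarith [sq_nonneg U, hx0.le]
  have h2U2x : 2*U^2*x < ε/2 := by nlinarith [hdec, hx0, hQ0]
  have hQx : 2*c/(2-α)*U^(2-α)*x < ε/2 := by nlinarith [hdec, hx0, h2U2x0]
  have hDx : 2*c*D ≤ (2-α)*(ε/2) := by
    have hDval : 2*c*D = (2-α)*(2*c/(2-α)*U^(2-α)*x) := by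
      rw [hDdef]; field_simp
    rw [hDval]
    exact mul_le_mul_of_nonneg_left hQx.le h2α.le
  have hεα : 0 < ε*(2-α) := mul_pos hε h2α
  have key1 : x * (A + B) < 2*c/(2-α) + ε := by
    rw [show 2*c/(2-α) + ε = (2*c + ε*(2-α))/(2-α) by field_simp,
      lt_div_iff₀ h2α]
    have eq1 : x*(A+B)*(2-α) = (x*A)*(2-α) + (x*B)*(2-α) := by ring
    have e1 : (x*B)*(2-α) ≤ (2*(c+ε'))*(1-D) := by
      calc (x*B)*(2-α) ≤ ((2*(c+ε'))*(x*J))*(2-α) :=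
            mul_le_mul_of_nonneg_right hxBub h2α.le
      _ = (2*(c+ε'))*(x*J*(2-α)) := by ring
      _ = (2*(c+ε'))*(1-D) := by rw [hxJ]
    have e2 : (2*(c+ε'))*(1-D) ≤ 2*c + 2*ε' := by
      nlinarith [mul_nonneg (by linarith : (0:ℝ) ≤ 2*(c+ε')) hD0.le]
    have e3 : (x*A)*(2-α) ≤ (2*U^2*x)*(2-α) := mul_le_mul_of_nonneg_right hxAub h2α.le
    have e4 : (2*U^2*x)*(2-α) < (ε/2)*(2-α) := mul_lt_mul_of_pos_right h2U2x h2α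
    linarith [eq1, e1, e2, e3, e4, hε'ε]
  have key2 : 2*c/(2-α) - ε < x * (A + B) := by
    rw [show 2*c/(2-α) - ε = (2*c - ε*(2-α))/(2-α) by field_simp,
      div_lt_iff₀ h2α]
    have eq1 : x*(A+B)*(2-α) = (x*A)*(2-α) + (x*B)*(2-α) := by ring
    have e5 : ((2*(c-ε'))*(x*J))*(2-α) ≤ (x*B)*(2-α) :=
      mul_le_mul_of_nonneg_right hxBlb h2α.le
    have e6 : ((2*(c-ε'))*(x*J))*(2-α) = (2*(c-ε'))*(1-D) := by
      calc ((2*(c-ε'))*(x*J))*(2-α) = (2*(c-ε'))*(x*J*(2-α)) := by ring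
      _ = (2*(c-ε'))*(1-D) := by rw [hxJ]
    have e7 : 2*c - 2*ε' - 2*c*D ≤ (2*(c-ε'))*(1-D) := by
      nlinarith [mul_nonneg hε'pos.le hD0.le]
    have e8 : 0 ≤ (x*A)*(2-α) := mul_nonneg hxA0 h2α.le
    linarith [eq1, e5, e6.symm.le, e6.le, e7, e8, hDx, hε'ε]
  rw [abs_sub_lt_iff]
  constructor <;> linarith [key1, key2]

private lemma winsor_sq {τ : ℝ} (hτ : 0 ≤ τ) (x : ℝ) : (winsor τ x)^2 = (min τ |x|)^2 := by
  unfold winsor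
  rcases le_total 0 x with hx | hx
  · rw [abs_of_nonneg hx, max_eq_right (le_min (by linarith) (by linarith))]
  · rw [abs_of_nonpos hx, min_eq_right (by linarith : x ≤ τ)]
    rcases le_total τ (-x) with h | h
    · rw [min_eq_left h, max_eq_left (by linarith : x ≤ -τ)]; ring
    · rw [min_eq_right h, max_eq_right (by linarith : -τ ≤ x)]; ring

private lemma layercake_winsor {Ω : Type*} [MeasurableSpace Ω] (μ : Measure Ω)
    [IsProbabilityMeasure μ] (w : Ω → ℝ) (hw : Measurable w) {τ : ℝ} (hτ : 0 < τ) :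
    ∫ ω, (winsor τ (w ω))^2 ∂μ
      = ∫ t in Ioo (0:ℝ) τ, 2*t*(μ {ω | t < |w ω|}).toReal := by
  set f : Ω → ℝ := fun ω => min τ |w ω| with hfdef
  have hf_mble : Measurable f := measurable_const.min hw.abs
  have hf_nn : ∀ ω, 0 ≤ f ω := fun ω => le_min hτ.le (abs_nonneg _)
  have hf_le : ∀ ω, f ω ≤ τ := fun ω => min_le_left _ _
  have hws : ∀ ω, (winsor τ (w ω))^2 = f ω ^ 2 := fun ω => winsor_sq hτ.le (w ω)
  have hpm : Measurable (fun t : ℝ => (μ {ω | t < |w ω|}).toReal) :=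
    Antitone.measurable (fun s t hst => ENNReal.toReal_mono (measure_ne_top μ _)
      (measure_mono (fun a ha => lt_of_le_of_lt hst ha)))
  have key := lintegral_comp_eq_lintegral_meas_lt_mul μ
    (g := fun t => 2*t) (Eventually.of_forall hf_nn) hf_mble.aemeasurable
    (fun t _ => (continuous_const.mul continuous_id).intervalIntegrable 0 t)
    (by
      filter_upwards [self_mem_ae_restrict measurableSet_Ioi] with t ht
      have : (0:ℝ) < t := ht
      linarith)
  have inner : ∀ ω, (∫ t in (0:ℝ)..f ω, 2*t) = f ω ^ 2 := by
    intro ω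
    rw [intervalIntegral.integral_const_mul, integral_id]
    ring
  simp_rw [inner] at key
  -- split the RHS of key
  have hdisj : Disjoint (Ioo (0:ℝ) τ) (Ici τ) := by
    rw [Set.disjoint_left]; rintro t ⟨_, h2⟩ h3; exact absurd h3 (not_le.2 h2)
  have hIoi : Ioi (0:ℝ) = Ioo 0 τ ∪ Ici τ := (Ioo_union_Ici_eq_Ioi hτ).symm
  rw [hIoi, lintegral_union measurableSet_Ici hdisj] at key
  have h2 : ∫⁻ t in Ici τ, μ {a | t < f a} * ENNReal.ofReal (2*t) = 0 := by
    have hz : ∀ t ∈ Ici (τ:ℝ), μ {a | t < f a} * ENNReal.ofReal (2*t) = 0 := by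
        intro t ht
        have he : {a | t < f a} = ∅ :=
          eq_empty_iff_forall_notMem.2 (fun a ha =>
            absurd ha (not_lt.2 (le_trans (hf_le a) ht)))
        rw [he, measure_empty, zero_mul]
    calc ∫⁻ t in Ici τ, μ {a | t < f a} * ENNReal.ofReal (2*t)
        = ∫⁻ _t in Ici τ, 0 := setLIntegral_congr_fun measurableSet_Ici hz
    _ = 0 := lintegral_zero
  rw [h2, add_zero] at key
  have h1 : ∫⁻ t in Ioo (0:ℝ) τ, μ {a | t < f a} * ENNReal.ofReal (2*t)
      = ∫⁻ t in Ioo (0:ℝ) τ, ENNReal.ofReal (2*t*(μ {ω | t < |w ω|}).toReal) := by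
    refine setLIntegral_congr_fun measurableSet_Ioo (fun t ht => ?_)
    have hset : {a | t < f a} = {ω | t < |w ω|} := by
      ext a
      simp only [hfdef, mem_setOf_eq, lt_min_iff]
      exact ⟨fun h => h.2, fun h => ⟨ht.2, h⟩⟩
    rw [hset, ← ENNReal.ofReal_toReal (measure_ne_top μ {ω | t < |w ω|}),
      ← ENNReal.ofReal_mul ENNReal.toReal_nonneg]
    rw [ENNReal.ofReal_toReal (measure_ne_top μ _)]
    congr 1
    ring
  rw [h1] at key
  -- convert to Bochner integrals
  have hint_f2 : Integrable (fun ω => f ω ^ 2) μ := by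
    refine (integrable_const (τ^2)).mono' (hf_mble.pow_const 2).aestronglyMeasurable
      (ae_of_all _ (fun ω => ?_))
    rw [Real.norm_eq_abs, abs_of_nonneg (sq_nonneg _)]
    exact pow_le_pow_left₀ (hf_nn ω) (hf_le ω) 2
  have hintp : IntegrableOn (fun t : ℝ => 2*t*(μ {ω | t < |w ω|}).toReal)
      (Ioo 0 τ) volume := by
    refine Measure.integrableOn_of_bounded (M := 2*τ) ?_
      ((measurable_const.mul measurable_id).mul hpm).aestronglyMeasurable ?_
    · rw [Real.volume_Ioo]; exact ENNReal.ofReal_ne_top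
    · refine (ae_restrict_iff' measurableSet_Ioo).2 (ae_of_all _ (fun t ht => ?_))
      have h0 := ENNReal.toReal_nonneg (a := μ {ω | t < |w ω|})
      have hle : (μ {ω | t < |w ω|}).toReal ≤ 1 := by
        have := prob_le_one (μ := μ) (s := {ω | t < |w ω|})
        exact ENNReal.toReal_le_of_le_ofReal zero_le_one (by simpa using this)
      rw [Real.norm_eq_abs, abs_of_nonneg (by nlinarith [ht.1.le])]
      nlinarith [ht.1.le, ht.2.le]
  have hL : ENNReal.ofReal (∫ ω, f ω ^ 2 ∂μ) = ∫⁻ ω, ENNReal.ofReal (f ω ^ 2) ∂μ :=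
    ofReal_integral_eq_lintegral_ofReal hint_f2 (ae_of_all _ (fun ω => sq_nonneg _))
  have hR : ENNReal.ofReal (∫ t in Ioo (0:ℝ) τ, 2*t*(μ {ω | t < |w ω|}).toReal)
      = ∫⁻ t in Ioo (0:ℝ) τ, ENNReal.ofReal (2*t*(μ {ω | t < |w ω|}).toReal) :=
    ofReal_integral_eq_lintegral_ofReal hintp
      ((ae_restrict_iff' measurableSet_Ioo).2 (ae_of_all _ (fun t ht => by
        show (0:ℝ) ≤ 2*t*(μ {ω | t < |w ω|}).toReal
        nlinarith [ht.1.le, ENNReal.toReal_nonneg (a := μ {ω | t < |w ω|})])))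
  have heq : ENNReal.ofReal (∫ ω, f ω ^ 2 ∂μ)
      = ENNReal.ofReal (∫ t in Ioo (0:ℝ) τ, 2*t*(μ {ω | t < |w ω|}).toReal) := by
    rw [hL, hR]; exact key
  have hA0 : 0 ≤ ∫ ω, f ω ^ 2 ∂μ := integral_nonneg (fun ω => sq_nonneg _)
  have hB0 : 0 ≤ ∫ t in Ioo (0:ℝ) τ, 2*t*(μ {ω | t < |w ω|}).toReal :=
    setIntegral_nonneg measurableSet_Ioo (fun t ht => by
      nlinarith [ht.1.le, ENNReal.toReal_nonneg (a := μ {ω | t < |w ω|})])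
  have := (ENNReal.ofReal_eq_ofReal_iff hA0 hB0).1 heq
  calc ∫ ω, (winsor τ (w ω))^2 ∂μ = ∫ ω, f ω ^ 2 ∂μ :=
        integral_congr_ae (Eventually.of_forall hws)
  _ = _ := this


end Auxiliary

/-- **Theorem 3.2 (The Fisher-information proxy diverges).**
Under the regularly-varying tail assumption with `α ∈ (1,2)`, `c > 0`, with
`τ_n = n^{1/α}` and `σ_n² = E[(w^{(τ_n)})²]`, the quantity `I_n = n/σ_n²` satisfies
`I_n / n^{(2α-2)/α} → (2-α)/(2c)`; in particular (since `(2α-2)/α > 0`)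
`I_n → ∞`: the data become increasingly informative even though the effective
variance diverges. -/
theorem fisher_information_proxy_diverges
    {Ω : Type*} [MeasurableSpace Ω] (μ : Measure Ω) [IsProbabilityMeasure μ]
    (w : Ω → ℝ) (hw : Measurable w)
    (α c : ℝ) (hα₁ : 1 < α) (hα₂ : α < 2) (hc : 0 < c)
    (hint : Integrable w μ) (hmean : ∫ ω, w ω ∂μ = 0)
    (htail : Tendsto (fun t : ℝ => t ^ α * (μ {ω | t < |w ω|}).toReal)
      atTop (nhds c)) :
    Tendsto (fun n : ℕ =>
        ((n : ℝ) / ∫ ω, (winsor ((n : ℝ) ^ (1 / α)) (w ω)) ^ 2 ∂μ) /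
          (n : ℝ) ^ ((2 * α - 2) / α))
      atTop (nhds ((2 - α) / (2 * c)))
    ∧ 0 < (2 * α - 2) / α
    ∧ Tendsto (fun n : ℕ =>
        (n : ℝ) / ∫ ω, (winsor ((n : ℝ) ^ (1 / α)) (w ω)) ^ 2 ∂μ) atTop atTop := by
  have h2α : (0:ℝ) < 2 - α := by linarith
  have hαpos : (0:ℝ) < α := by linarith
  have hq : 0 < (2 * α - 2) / α := div_pos (by linarith) hαpos
  set p : ℝ → ℝ := fun t => (μ {ω | t < |w ω|}).toReal with hpdef
  have hpm : Measurable p :=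
    Antitone.measurable (fun s t hst => ENNReal.toReal_mono (measure_ne_top μ _)
      (measure_mono (fun a ha => lt_of_le_of_lt hst ha)))
  have hp0 : ∀ t, 0 ≤ p t := fun t => ENNReal.toReal_nonneg
  have hp1 : ∀ t, p t ≤ 1 := fun t => by
    have h1 := prob_le_one (μ := μ) (s := {ω | t < |w ω|})
    have := ENNReal.toReal_mono ENNReal.one_ne_top h1
    simpa using this
  have hkar := karamata_aux hpm hp0 hp1 hα₁ hα₂ hc htail
  have hLne : (2*c/(2-α)) ≠ 0 := by positivity
  have hinv := hkar.inv₀ hLne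
  have hLinv : (2*c/(2-α))⁻¹ = (2-α)/(2*c) := inv_div _ _
  rw [hLinv] at hinv
  have hτn : Tendsto (fun n : ℕ => ((n:ℝ)) ^ (1/α)) atTop atTop :=
    (tendsto_rpow_atTop (by positivity)).comp tendsto_natCast_atTop_atTop
  have hseq := hinv.comp hτn
  -- identification of the sequences
  have heqv : ∀ᶠ n : ℕ in atTop,
      ((((n:ℝ) ^ (1/α)) ^ (α-2) * ∫ t in Set.Ioo (0:ℝ) ((n:ℝ) ^ (1/α)), 2*t*p t)⁻¹)
      = ((n : ℝ) / ∫ ω, (winsor ((n : ℝ) ^ (1 / α)) (w ω)) ^ 2 ∂μ) /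
          (n : ℝ) ^ ((2 * α - 2) / α) := by
    filter_upwards [eventually_ge_atTop 1] with n hn
    have hn0 : (0:ℝ) < n := by exact_mod_cast hn
    have hτ0 : (0:ℝ) < (n:ℝ) ^ (1/α) := Real.rpow_pos_of_pos hn0 _
    have hLC : ∫ ω, (winsor ((n : ℝ) ^ (1 / α)) (w ω)) ^ 2 ∂μ
        = ∫ t in Set.Ioo (0:ℝ) ((n:ℝ) ^ (1/α)), 2*t*p t :=
      layercake_winsor μ w hw hτ0
    rw [hLC]
    set Gτ := ∫ t in Set.Ioo (0:ℝ) ((n:ℝ) ^ (1/α)), 2*t*p t with hG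
    have e1 : ((n:ℝ)^(1/α))^(α-2) = (n:ℝ)^((α-2)/α) := by
      rw [← Real.rpow_mul hn0.le]
      congr 1
      field_simp
    have e2 : ((n:ℝ)^((α-2)/α))⁻¹ = (n:ℝ)^((2-α)/α) := by
      rw [← Real.rpow_neg hn0.le]
      congr 1
      ring
    have e4 : (n:ℝ) / (n:ℝ)^((2*α-2)/α) = (n:ℝ)^((2-α)/α) := by
      have h1 : (2-α)/α = 1 - (2*α-2)/α := by field_simp; ring
      rw [h1, Real.rpow_sub hn0, Real.rpow_one]
    calc (((n:ℝ)^(1/α))^(α-2) * Gτ)⁻¹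
        = (((n:ℝ)^(1/α))^(α-2))⁻¹ * Gτ⁻¹ := mul_inv _ _
    _ = (n:ℝ)^((2-α)/α) * Gτ⁻¹ := by rw [e1, e2]
    _ = ((n:ℝ) / (n:ℝ)^((2*α-2)/α)) * Gτ⁻¹ := by rw [e4]
    _ = ((n:ℝ) / Gτ) / (n:ℝ)^((2*α-2)/α) := by
        rw [div_mul_eq_mul_div, ← div_eq_mul_inv]
  have hmain : Tendsto (fun n : ℕ =>
      ((n : ℝ) / ∫ ω, (winsor ((n : ℝ) ^ (1 / α)) (w ω)) ^ 2 ∂μ) /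
        (n : ℝ) ^ ((2 * α - 2) / α)) atTop (nhds ((2 - α) / (2 * c))) :=
    hseq.congr' heqv
  refine ⟨hmain, hq, ?_⟩
  have hnq : Tendsto (fun n : ℕ => (n:ℝ)^((2*α-2)/α)) atTop atTop :=
    (tendsto_rpow_atTop hq).comp tendsto_natCast_atTop_atTop
  have hprod := Tendsto.pos_mul_atTop (show 0 < (2-α)/(2*c) by positivity) hmain hnq
  refine hprod.congr' ?_
  filter_upwards [eventually_ge_atTop 1] with n hn
  have hn0 : (0:ℝ) < n := by exact_mod_cast hn
  exact div_mul_cancel₀ _ (ne_of_gt (Real.rpow_pos_of_pos hn0 _))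
end

section
/- Let μ be a probability measure on ℝ with compact support contained in (0, ∞), and let γ > 0 and m > 0. Then the equation 1/v = 1 + γ·∫ s/(s·v + m) dμ(s) has a unique solution v ∈ (0, 1]. (Existence and uniqueness of the companion Stieltjes fixed point v appearing in the closed-form ridge risk representation of Theorem 3.4.) -/
open Filter MeasureTheory

/-- **Existence and uniqueness of the companion Stieltjes fixed point (Theorem 3.4).**
Let `μ` be a probability measure on `ℝ` whose support is contained in a compact set
`[a,b] ⊂ (0,∞)`, and let `γ > 0`, `m > 0`.  Then the equation
`1/v = 1 + γ ∫ s/(s v + m) dμ(s)` has a unique solution `v ∈ (0, 1]`. -/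
theorem stieltjes_fixed_point_exists_unique
    (μ : Measure ℝ) [IsProbabilityMeasure μ]
    (a b : ℝ) (ha : 0 < a) (hab : a ≤ b)
    (hsupp : μ (Set.Icc a b)ᶜ = 0)
    (γ m : ℝ) (hγ : 0 < γ) (hm : 0 < m) :
    ∃! v : ℝ, v ∈ Set.Ioc (0 : ℝ) 1 ∧
      1 / v = 1 + γ * ∫ s, s / (s * v + m) ∂μ := by
  have hb : 0 < b := lt_of_lt_of_le ha hab
  have hmem : ∀ᵐ s ∂μ, s ∈ Set.Icc a b := mem_ae_iff.mpr hsupp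
  set F : ℝ → ℝ → ℝ := fun v s => s * v / (s * v + m) with hF
  set J : ℝ → ℝ := fun v => ∫ s, F v s ∂μ with hJ
  set G : ℝ → ℝ := fun v => v + γ * J v with hGdef
  -- denominator bound
  have hden : ∀ v : ℝ, -(m / (2 * b)) ≤ v → ∀ s ∈ Set.Icc a b, m / 2 ≤ s * v + m := by
    intro v hv s hs
    rcases le_or_gt 0 v with h0 | h0
    · nlinarith [hs.1, hs.2, mul_nonneg (le_trans ha.le hs.1) h0]
    · have h1 : b * v ≤ s * v := by nlinarith [hs.2]
      have h2 : b * (-(m / (2 * b))) ≤ b * v := by nlinarith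
      have h3 : b * (-(m / (2 * b))) = -(m / 2) := by field_simp
      nlinarith
  have hmeas : ∀ v : ℝ, AEStronglyMeasurable (F v) μ := fun v =>
    ((measurable_id.mul_const v).div
      ((measurable_id.mul_const v).add_const m)).aestronglyMeasurable
  have hboundpt : ∀ v : ℝ, -(m / (2 * b)) ≤ v → |v| ≤ 2 → ∀ s ∈ Set.Icc a b,
      ‖F v s‖ ≤ 4 * b / m := by
    intro v hv hv2 s hs
    have hd := hden v hv s hs
    have hd0 : 0 < s * v + m := lt_of_lt_of_le (by positivity) hd
    have habs : |s * v| ≤ 2 * b := by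
      rw [abs_mul]
      have h1 : |s| ≤ b := by
        rw [abs_of_pos (lt_of_lt_of_le ha hs.1)]; exact hs.2
      calc |s| * |v| ≤ b * 2 := mul_le_mul h1 hv2 (abs_nonneg _) hb.le
        _ = 2 * b := by ring
    have : ‖F v s‖ = |s * v| / (s * v + m) := by
      rw [Real.norm_eq_abs, abs_div, abs_of_pos hd0]
    rw [this]
    calc |s * v| / (s * v + m) ≤ (2 * b) / (m / 2) :=
          div_le_div₀ (by positivity) habs (by positivity) hd
      _ = 4 * b / m := by field_simp; ring
  have hint : ∀ v : ℝ, -(m / (2 * b)) ≤ v → |v| ≤ 2 → Integrable (F v) μ := by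
    intro v h1 h2
    exact (integrable_const (4 * b / m)).mono' (hmeas v)
      (hmem.mono fun s hs => hboundpt v h1 h2 s hs)
  have hok : ∀ v : ℝ, v ∈ Set.Icc (0:ℝ) 1 → -(m / (2 * b)) ≤ v ∧ |v| ≤ 2 := by
    intro v hv
    constructor
    · have : (0:ℝ) ≤ m / (2 * b) := by positivity
      linarith [hv.1]
    · rw [abs_le]; constructor <;> linarith [hv.1, hv.2]
  -- strict monotonicity of G on [0,1]
  have hSM : StrictMonoOn G (Set.Icc (0:ℝ) 1) := by
    intro v1 h1 v2 h2 h12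
    have hJle : J v1 ≤ J v2 := by
      refine integral_mono_ae (hint v1 (hok v1 h1).1 (hok v1 h1).2)
        (hint v2 (hok v2 h2).1 (hok v2 h2).2) ?_
      filter_upwards [hmem] with s hs
      have hs0 : 0 < s := lt_of_lt_of_le ha hs.1
      have d1 : 0 < s * v1 + m := by nlinarith [mul_nonneg hs0.le h1.1]
      have d2 : 0 < s * v2 + m := by nlinarith [mul_nonneg hs0.le (le_trans h1.1 h12.le)]
      simp only [hF]
      rw [div_le_div_iff₀ d1 d2]
      nlinarith [mul_nonneg (mul_pos hs0 hm).le (sub_nonneg.mpr h12.le)]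
    simp only [hGdef]
    have := mul_le_mul_of_nonneg_left hJle hγ.le
    linarith
  -- continuity of J on [0,1]
  have hcont : ∀ v₀ ∈ Set.Icc (0:ℝ) 1, ContinuousAt J v₀ := by
    intro v₀ hv₀
    have hε : (0:ℝ) < min 1 (m / (2 * b)) := lt_min one_pos (by positivity)
    refine continuousAt_of_dominated (bound := fun _ => 4 * b / m)
      (Eventually.of_forall hmeas) ?_ (integrable_const _) ?_
    · filter_upwards [Metric.ball_mem_nhds v₀ hε] with v hv
      have hdist : |v - v₀| < min 1 (m / (2 * b)) := by
        simpa [Real.dist_eq] using hv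
      have h1 : -(m / (2 * b)) ≤ v := by
        have := (abs_lt.mp hdist).1
        have hle := min_le_right (1:ℝ) (m / (2 * b))
        linarith [hv₀.1]
      have h2 : |v| ≤ 2 := by
        have ha' := abs_lt.mp hdist
        have hle := min_le_left (1:ℝ) (m / (2 * b))
        rw [abs_le]
        constructor <;> linarith [hv₀.1, hv₀.2]
      filter_upwards [hmem] with s hs
      exact hboundpt v h1 h2 s hs
    · filter_upwards [hmem] with s hs
      have hs0 : 0 < s := lt_of_lt_of_le ha hs.1
      have hd : s * v₀ + m ≠ 0 := by nlinarith [mul_nonneg hs0.le hv₀.1]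
      exact ContinuousAt.div ((continuous_const.mul continuous_id).continuousAt)
        (((continuous_const.mul continuous_id).add continuous_const).continuousAt) hd
  have hGc : ContinuousOn G (Set.Icc (0:ℝ) 1) := by
    intro v hv
    exact (continuousAt_id.add (continuousAt_const.mul (hcont v hv))).continuousWithinAt
  have hG0 : G 0 = 0 := by simp [hGdef, hJ, hF]
  have hG1 : 1 ≤ G 1 := by
    have hJ1 : 0 ≤ J 1 := by
      refine integral_nonneg_of_ae ?_
      filter_upwards [hmem] with s hs
      have hs0 : 0 < s := lt_of_lt_of_le ha hs.1
      have : 0 < s * 1 + m := by nlinarith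
      simp only [hF]
      positivity
    simp only [hGdef]
    nlinarith
  -- existence via IVT
  obtain ⟨v, hvmem, hGv⟩ := intermediate_value_Icc (by norm_num : (0:ℝ) ≤ 1) hGc
    (by rw [hG0]; exact ⟨zero_le_one, hG1⟩)
  have hv0 : 0 < v := by
    rcases lt_or_eq_of_le hvmem.1 with h | h
    · exact h
    · exfalso; rw [← h] at hGv; rw [hG0] at hGv; norm_num at hGv
  -- equivalence with the original equation
  have hEquiv : ∀ w : ℝ, w ∈ Set.Ioc (0:ℝ) 1 →
      ((1 / w = 1 + γ * ∫ s, s / (s * w + m) ∂μ) ↔ G w = 1) := by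
    intro w hw
    have hw0 : 0 < w := hw.1
    have hJw : J w = w * ∫ s, s / (s * w + m) ∂μ := by
      rw [← integral_const_mul w (fun s => s / (s * w + m))]
      refine integral_congr_ae (Eventually.of_forall fun s => ?_)
      show s * w / (s * w + m) = w * (s / (s * w + m))
      rw [mul_comm s w, mul_div_assoc]
    constructor
    · intro heq
      have h1 : 1 = (1 + γ * ∫ s, s / (s * w + m) ∂μ) * w :=
        (div_eq_iff hw0.ne').mp heq
      simp only [hGdef, hJw]
      linear_combination -h1
    · intro heq
      rw [div_eq_iff hw0.ne']
      simp only [hGdef, hJw] at heq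
      linear_combination -heq
  refine ⟨v, ⟨⟨hv0, hvmem.2⟩, (hEquiv v ⟨hv0, hvmem.2⟩).mpr hGv⟩, ?_⟩
  rintro w ⟨hwmem, hweq⟩
  have hGw : G w = 1 := (hEquiv w hwmem).mp hweq
  exact hSM.injOn ⟨hwmem.1.le, hwmem.2⟩ ⟨hvmem.1, hvmem.2⟩ (hGw.trans hGv.symm)
end
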